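/- Let g₁, …, gₙ : ℝ → [0,∞) be piecewise r-log-Lipschitz functions and let M(gᵢ) denote the set of minima of gᵢ in its pieces. Then for every x ∈ ℝ there exists x' ∈ ∪_{i∈[n]} M(gᵢ) such that gᵢ(x') ≤ 2^r · gᵢ(x) for every i ∈ [n]. -/

import Mathlib

/-- Data witnessing that `g : ℝ → [0,∞)` is piecewise `r`-log-Lipschitz:
a partition of `ℝ` into `m` pieces `X j`, each with a unique infimum point
`x₀ j` of `g`, and a non-decreasing `r`-log-Lipschitz function `h j` with
`g x = h j |x - x₀ j|` on `X j`. -/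
structure PiecewiseLogLipschitzData (r : ℝ) (g : ℝ → ℝ) where
  m : ℕ
  X : Fin m → Set ℝ
  x₀ : Fin m → ℝ
  h : Fin m → ℝ → ℝ
  cover : (⋃ j, X j) = Set.univ
  disj : ∀ j j' : Fin m, j ≠ j' → Disjoint (X j) (X j')
  mem_piece : ∀ j, x₀ j ∈ X j
  isMin : ∀ j, ∀ x ∈ X j, g (x₀ j) ≤ g x
  uniqueMin : ∀ j, ∀ x ∈ X j, g x = g (x₀ j) → x = x₀ j
  h_nonneg : ∀ j s, 0 ≤ h j s
  h_mono : ∀ j, MonotoneOn (h j) (Set.Ici 0)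
  h_loglip : ∀ j, ∀ c : ℝ, 1 ≤ c → ∀ s : ℝ, 0 ≤ s → h j (c * s) ≤ c ^ r * h j s
  eq_on_piece : ∀ j, ∀ x ∈ X j, g x = h j |x - x₀ j|

/-- The set `M(g)` of minima of the pieces. -/
def PiecewiseLogLipschitzData.minima {r : ℝ} {g : ℝ → ℝ}
    (d : PiecewiseLogLipschitzData r g) : Set ℝ := Set.range d.x₀



-- core numeric inequality, used for both sides
lemma helper_ineq {r : ℝ} (hr : 0 ≤ r) (h : ℝ → ℝ)
    (h_nonneg : ∀ s, 0 ≤ h s) (h_mono : MonotoneOn h (Set.Ici 0))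
    (h_loglip : ∀ c : ℝ, 1 ≤ c → ∀ s : ℝ, 0 ≤ s → h (c * s) ≤ c ^ r * h s)
    {D A τq τp : ℝ} (hD : 0 < D) (hA : D ≤ A)
    (h0q : 0 ≤ τq) (hqp : τq ≤ τp) (hpD : τp ≤ D) :
    (h (A + τp) * (D + τq) ^ r ≤ h (A + τq) * (D + τp) ^ r) ∧
    (h (A - τp) * (D + τq) ^ r ≤ h (A - τq) * (D + τp) ^ r) := by
  have hDq : 0 < D + τq := by linarith
  have hDp : 0 < D + τp := by linarith
  have hAq : 0 < A + τq := by linarith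
  constructor
  · set c := (A + τp) / (A + τq) with hc
    have hc1 : 1 ≤ c := (one_le_div hAq).2 (by linarith)
    have hc0 : 0 ≤ c := by linarith
    have hlog : h (A + τp) ≤ c ^ r * h (A + τq) := by
      have := h_loglip c hc1 (A + τq) hAq.le
      rwa [hc, div_mul_cancel₀ _ hAq.ne'] at this
    have hcd : c * (D + τq) ≤ D + τp := by
      rw [hc, div_mul_eq_mul_div, div_le_iff₀ hAq]
      nlinarith [mul_nonneg (sub_nonneg.2 hqp) (sub_nonneg.2 hA)]
    calc h (A + τp) * (D + τq) ^ r
        ≤ (c ^ r * h (A + τq)) * (D + τq) ^ r :=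
          mul_le_mul_of_nonneg_right hlog (Real.rpow_nonneg hDq.le r)
      _ = h (A + τq) * (c * (D + τq)) ^ r := by
          rw [Real.mul_rpow hc0 hDq.le]; ring
      _ ≤ h (A + τq) * (D + τp) ^ r := by
          refine mul_le_mul_of_nonneg_left ?_ (h_nonneg _)
          exact Real.rpow_le_rpow (mul_nonneg hc0 hDq.le) hcd hr
  · have h1 : h (A - τp) ≤ h (A - τq) :=
      h_mono (by simp only [Set.mem_Ici]; linarith) (by simp only [Set.mem_Ici]; linarith)
        (by linarith)
    have h2 : (D + τq) ^ r ≤ (D + τp) ^ r := Real.rpow_le_rpow hDq.le (by linarith) hr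
    exact mul_le_mul h1 h2 (Real.rpow_nonneg hDq.le r) (h_nonneg _)

-- continuous + piecewise nonincreasing (finitely many pieces) ⟹ endpoint bound
lemma keyA {F : ℝ → ℝ} (hF : Continuous F) {ι : Type*} [DecidableEq ι] (A : ι → Set ℝ)
    (hmono : ∀ k, ∀ s ∈ A k, ∀ t ∈ A k, s ≤ t → F t ≤ F s) :
    ∀ (S : Finset ι) (u v : ℝ), u ≤ v → (Set.Icc u v ⊆ ⋃ k ∈ S, A k) → F v ≤ F u := by
  intro S
  induction S using Finset.strongInduction with
  | _ S ih =>
    intro u v huv hcov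
    have hu : u ∈ Set.Icc u v := ⟨le_refl u, huv⟩
    obtain ⟨a, haS, hua⟩ : ∃ a ∈ S, u ∈ A a := by
      have := hcov hu
      simpa using this
    set T := A a ∩ Set.Icc u v with hT
    have hTne : T.Nonempty := ⟨u, hua, hu⟩
    have hTbdd : BddAbove T := ⟨v, fun t ht => ht.2.2⟩
    set c := sSup T with hc
    have hcT : c ∈ closure T := (isLUB_csSup hTne hTbdd).mem_closure hTne
    have hcu : u ≤ c := le_csSup hTbdd ⟨hua, hu⟩
    have hcv : c ≤ v := csSup_le hTne (fun t ht => ht.2.2)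
    have hFcu : F c ≤ F u := by
      have hcl : IsClosed {t : ℝ | F t ≤ F u} := isClosed_le hF continuous_const
      have hsub : T ⊆ {t : ℝ | F t ≤ F u} := fun t ht => hmono a u hua t ht.1 ht.2.1
      exact (closure_minimal hsub hcl) hcT
    rcases eq_or_lt_of_le hcv with hcv' | hcv'
    · exact hcv' ▸ hFcu
    · have step : ∀ c'' ∈ Set.Ioc c v, F v ≤ F c'' := by
        rintro c'' ⟨hc1, hc2⟩
        refine ih (S.erase a) (Finset.erase_ssubset haS) c'' v hc2 ?_
        intro t ht
        have htuv : t ∈ Set.Icc u v := ⟨le_trans hcu (le_trans hc1.le ht.1), ht.2⟩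
        obtain ⟨k, hkS, htk⟩ : ∃ k ∈ S, t ∈ A k := by simpa using hcov htuv
        have hka : k ≠ a := by
          rintro rfl
          have : t ≤ c := le_csSup hTbdd ⟨htk, htuv⟩
          linarith [ht.1, hc1]
        simp only [Set.mem_iUnion]
        exact ⟨k, Finset.mem_erase.2 ⟨hka, hkS⟩, htk⟩
      have hvc : F v ≤ F c := by
        have htend : Filter.Tendsto F (nhdsWithin c (Set.Ioi c)) (nhds (F c)) :=
          (hF.continuousAt (x := c)).continuousWithinAt
        refine ge_of_tendsto htend ?_
        filter_upwards [Ioc_mem_nhdsGT_of_mem ⟨le_refl c, hcv'⟩] with t ht using step t ht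
      linarith

lemma keyA' {F : ℝ → ℝ} (hF : Continuous F) {ι : Type*} [DecidableEq ι] (A : ι → Set ℝ)
    (hmono : ∀ k, ∀ s ∈ A k, ∀ t ∈ A k, s ≤ t → F s ≤ F t)
    (S : Finset ι) (u v : ℝ) (huv : u ≤ v) (hcov : Set.Icc u v ⊆ ⋃ k ∈ S, A k) :
    F u ≤ F v := by
  have hmain := keyA (F := fun t => F (-t)) (hF.comp continuous_neg)
    (fun k => Neg.neg ⁻¹' A k) ?_ S (-v) (-u) (by linarith) ?_
  · simpa using hmain
  · intro k s hs t ht hst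
    exact hmono k (-t) ht (-s) hs (by linarith)
  · intro t ht
    have h2 : -t ∈ Set.Icc u v := ⟨by linarith [ht.2], by linarith [ht.1]⟩
    have := hcov h2
    simp only [Set.mem_iUnion] at this ⊢
    obtain ⟨k, hk, hmem⟩ := this
    exact ⟨k, hk, hmem⟩

lemma mainlemma {r : ℝ} (hr : 0 ≤ r) {g : ℝ → ℝ} (hg0 : ∀ y, 0 ≤ g y)
    (hgc : Continuous g) (d : PiecewiseLogLipschitzData r g) (x x' : ℝ)
    (hnear : ∀ k, |x - x'| ≤ |x - d.x₀ k|) :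
    g x' ≤ 2 ^ r * g x := by
  classical
  have h2r : (1:ℝ) ≤ 2 ^ r := by
    calc (1:ℝ) = 2 ^ (0:ℝ) := (Real.rpow_zero 2).symm
    _ ≤ 2 ^ r := Real.rpow_le_rpow_of_exponent_le one_le_two hr
  set D := |x - x'| with hDdef
  rcases eq_or_lt_of_le (abs_nonneg (x - x')) with hD0 | hD
  · have hxx : x' = x := by
      have := abs_eq_zero.1 hD0.symm
      linarith [this]
    rw [hxx]
    nlinarith [hg0 x]
  -- D > 0
  have hden : ∀ t : ℝ, 0 < D + |x - t| := fun t => by positivity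
  set F : ℝ → ℝ := fun t => g t * (D / (D + |x - t|)) ^ r with hFdef
  have hFc : Continuous F := by
    apply hgc.mul
    apply Continuous.rpow_const
    · exact continuous_const.div (continuous_const.add (continuous_const.sub continuous_id).abs)
        (fun t => (hden t).ne')
    · intro t; exact Or.inr hr
  have hFx : F x = g x := by
    simp only [hFdef, sub_self, abs_zero, add_zero, div_self (show D ≠ 0 from hD.ne'), Real.one_rpow, mul_one]
  have hFx' : F x' = g x' * (1/2 : ℝ) ^ r := by
    have : D / (D + |x - x'|) = 1/2 := by
      rw [← hDdef]; field_simp [show D ≠ 0 from hD.ne']; ring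
    simp only [hFdef, this]
  -- the key step: F x' ≤ F x
  have hkey : F x' ≤ F x := by
    rcases le_total x x' with hxx' | hxx'
    · -- right side: x ≤ x', x' = x + D
      have hx'eq : x' = x + D := by
        rw [hDdef, abs_of_nonpos (by linarith)]; ring
      refine keyA hFc (fun k => d.X k ∩ Set.Icc x x') ?_ Finset.univ x x' hxx' ?_
      · rintro k s ⟨hsX, hs1, hs2⟩ t ⟨htX, ht1, ht2⟩ hst
        set w := d.x₀ k with hw
        have hAx : D ≤ |x - w| := hnear k
        have habs_s : |x - s| = s - x := by rw [abs_sub_comm, abs_of_nonneg (by linarith)]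
        have habs_t : |x - t| = t - x := by rw [abs_sub_comm, abs_of_nonneg (by linarith)]
        have hgs : g s = d.h k |s - w| := d.eq_on_piece k s hsX
        have hgt : g t = d.h k |t - w| := d.eq_on_piece k t htX
        have hcore : d.h k |t - w| * (D + (s - x)) ^ r ≤ d.h k |s - w| * (D + (t - x)) ^ r := by
          rcases le_total w x with hwx | hwx
          · -- vertex on the left : |t-w| = (x-w) + (t-x)
            have hA : D ≤ x - w := by rwa [abs_of_nonneg (by linarith)] at hAx
            have e1 : |t - w| = (x - w) + (t - x) := by
              rw [abs_of_nonneg (by linarith)]; ring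
            have e2 : |s - w| = (x - w) + (s - x) := by
              rw [abs_of_nonneg (by linarith)]; ring
            rw [e1, e2]
            exact (helper_ineq hr (d.h k) (d.h_nonneg k) (d.h_mono k) (d.h_loglip k)
              hD hA (by linarith) (by linarith) (by linarith)).1
          · -- vertex on the right : w ≥ x + D
            have hA : D ≤ w - x := by rwa [abs_of_nonpos (by linarith), neg_sub] at hAx
            have e1 : |t - w| = (w - x) - (t - x) := by
              rw [abs_of_nonpos (by linarith)]; ring
            have e2 : |s - w| = (w - x) - (s - x) := by
              rw [abs_of_nonpos (by linarith)]; ring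
            rw [e1, e2]
            exact (helper_ineq hr (d.h k) (d.h_nonneg k) (d.h_mono k) (d.h_loglip k)
              hD hA (by linarith) (by linarith) (by linarith)).2
        -- convert hcore into F t ≤ F s
        simp only [hFdef, habs_s, habs_t, hgs, hgt]
        rw [Real.div_rpow hD.le (by linarith : (0:ℝ) ≤ D + (t - x)),
            Real.div_rpow hD.le (by linarith : (0:ℝ) ≤ D + (s - x))]
        rw [mul_div_assoc', mul_div_assoc', div_le_div_iff₀
          (Real.rpow_pos_of_pos (by linarith : (0:ℝ) < D + (t - x)) r)
          (Real.rpow_pos_of_pos (by linarith : (0:ℝ) < D + (s - x)) r)]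
        nlinarith [mul_le_mul_of_nonneg_right hcore (Real.rpow_nonneg hD.le r)]
      · intro t ht
        have : t ∈ ⋃ j, d.X j := d.cover ▸ Set.mem_univ t
        obtain ⟨k, hk⟩ := Set.mem_iUnion.1 this
        simp only [Set.mem_iUnion]
        exact ⟨k, Finset.mem_univ k, hk, ht⟩
    · -- left side: x' ≤ x, x' = x - D
      have hx'eq : x' = x - D := by
        rw [hDdef, abs_of_nonneg (by linarith)]; ring
      refine keyA' hFc (fun k => d.X k ∩ Set.Icc x' x) ?_ Finset.univ x' x hxx' ?_
      · rintro k s ⟨hsX, hs1, hs2⟩ t ⟨htX, ht1, ht2⟩ hst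
        set w := d.x₀ k with hw
        have hAx : D ≤ |x - w| := hnear k
        have habs_s : |x - s| = x - s := by rw [abs_of_nonneg (by linarith)]
        have habs_t : |x - t| = x - t := by rw [abs_of_nonneg (by linarith)]
        have hgs : g s = d.h k |s - w| := d.eq_on_piece k s hsX
        have hgt : g t = d.h k |t - w| := d.eq_on_piece k t htX
        have hcore : d.h k |s - w| * (D + (x - t)) ^ r ≤ d.h k |t - w| * (D + (x - s)) ^ r := by
          rcases le_total w x with hwx | hwx
          · -- vertex left : w ≤ x - D ≤ s ; |s-w| = (x-w) - (x-s)
            have hA : D ≤ x - w := by rwa [abs_of_nonneg (by linarith)] at hAx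
            have e1 : |s - w| = (x - w) - (x - s) := by
              rw [abs_of_nonneg (by linarith)]; ring
            have e2 : |t - w| = (x - w) - (x - t) := by
              rw [abs_of_nonneg (by linarith)]; ring
            rw [e1, e2]
            exact (helper_ineq hr (d.h k) (d.h_nonneg k) (d.h_mono k) (d.h_loglip k)
              hD hA (by linarith) (by linarith) (by linarith)).2
          · -- vertex right : w ≥ x + D ≥ x ≥ t ≥ s ; |s-w| = (w-x) + (x-s)
            have hA : D ≤ w - x := by rwa [abs_of_nonpos (by linarith), neg_sub] at hAx
            have e1 : |s - w| = (w - x) + (x - s) := by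
              rw [abs_of_nonpos (by linarith)]; ring
            have e2 : |t - w| = (w - x) + (x - t) := by
              rw [abs_of_nonpos (by linarith)]; ring
            rw [e1, e2]
            exact (helper_ineq hr (d.h k) (d.h_nonneg k) (d.h_mono k) (d.h_loglip k)
              hD hA (by linarith) (by linarith) (by linarith)).1
        simp only [hFdef, habs_s, habs_t, hgs, hgt]
        rw [Real.div_rpow hD.le (by linarith : (0:ℝ) ≤ D + (x - s)),
            Real.div_rpow hD.le (by linarith : (0:ℝ) ≤ D + (x - t))]
        rw [mul_div_assoc', mul_div_assoc', div_le_div_iff₀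
          (Real.rpow_pos_of_pos (by linarith : (0:ℝ) < D + (x - s)) r)
          (Real.rpow_pos_of_pos (by linarith : (0:ℝ) < D + (x - t)) r)]
        nlinarith [mul_le_mul_of_nonneg_right hcore (Real.rpow_nonneg hD.le r)]
      · intro t ht
        have : t ∈ ⋃ j, d.X j := d.cover ▸ Set.mem_univ t
        obtain ⟨k, hk⟩ := Set.mem_iUnion.1 this
        simp only [Set.mem_iUnion]
        exact ⟨k, Finset.mem_univ k, hk, ht⟩
  -- finish
  rw [hFx', hFx] at hkey
  have hhalf : ((1:ℝ)/2) ^ r * 2 ^ r = 1 := by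
    rw [← Real.mul_rpow (by norm_num) (by norm_num)]
    norm_num
  have h2pos : (0:ℝ) < 2 ^ r := Real.rpow_pos_of_pos (by norm_num) r
  calc g x' = g x' * ((1/2 : ℝ) ^ r * 2 ^ r) := by rw [hhalf, mul_one]
    _ = (g x' * (1/2 : ℝ) ^ r) * 2 ^ r := by ring
    _ ≤ g x * 2 ^ r := mul_le_mul_of_nonneg_right hkey h2pos.le
    _ = 2 ^ r * g x := by ring


/-- Simultaneous approximation: for piecewise `r`-log-Lipschitz functions
`g 1, …, g n` and every `x ∈ ℝ`, there is `x'` in the union of the minima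
such that `g i x' ≤ 2^r * g i x` for every `i`. -/
theorem stmt6 (n : ℕ) (hn : 0 < n) (r : ℝ) (hr : 0 ≤ r)
    (g : Fin n → ℝ → ℝ)
    (hg0 : ∀ i x, 0 ≤ g i x)
    (hgc : ∀ i, Continuous (g i))
    (d : ∀ i, PiecewiseLogLipschitzData r (g i)) :
    ∀ x : ℝ, ∃ x' ∈ ⋃ i, (d i).minima, ∀ i, g i x' ≤ (2:ℝ) ^ r * g i x := by
  classical
  intro x
  have hm : ∀ i, 0 < (d i).m := by
    intro i
    rcases (Nat.eq_zero_or_pos (d i).m).symm with h | h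
    · exact h
    · exfalso
      have h0 : (0:ℝ) ∈ ⋃ j, (d i).X j := (d i).cover ▸ Set.mem_univ 0
      obtain ⟨j, _⟩ := Set.mem_iUnion.1 h0
      exact absurd j.2 (by omega)
  set T : Finset ℝ :=
    Finset.univ.biUnion (fun i : Fin n => Finset.image (d i).x₀ Finset.univ) with hT
  have hTmem : ∀ i (j : Fin (d i).m), (d i).x₀ j ∈ T := by
    intro i j
    simp only [hT, Finset.mem_biUnion, Finset.mem_image]
    exact ⟨i, Finset.mem_univ i, j, Finset.mem_univ j, rfl⟩
  have hTne : T.Nonempty := ⟨(d ⟨0, hn⟩).x₀ ⟨0, hm _⟩, hTmem _ _⟩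
  obtain ⟨x', hx'T, hx'min⟩ := T.exists_min_image (fun u => |x - u|) hTne
  have hx'mem : x' ∈ ⋃ i, (d i).minima := by
    simp only [hT, Finset.mem_biUnion, Finset.mem_image] at hx'T
    obtain ⟨i, _, j, _, rfl⟩ := hx'T
    exact Set.mem_iUnion.2 ⟨i, ⟨j, rfl⟩⟩
  refine ⟨x', hx'mem, fun i => ?_⟩
  exact mainlemma hr (hg0 i) (hgc i) (d i) x x' (fun k => hx'min _ (hTmem i k))
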